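/- Let G be an n-vertex simple graph with minimum degree at least ℓ ≥ 1, and suppose a maximum matching of G has size m with n > 2m. Then there exist disjoint vertex sets L and S with |L| = ℓ and |S| ≥ (n − 2m)/C(2m, ℓ) such that every vertex of S is adjacent to every vertex of L; in particular, G contains a complete bipartite graph K_{ℓ, ⌈(n−2m)/C(2m,ℓ)⌉} as a (not necessarily induced) subgraph. -/
import Mathlib


open SimpleGraph

/-- `G` contains a matching of size `m`: a family of `m` edges whose `2m` endpoints are
pairwise distinct. -/
def HasMatchingOfSize {V : Type*} (G : SimpleGraph V) (m : ℕ) : Prop :=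
  ∃ e : Fin m → V × V, (∀ i, G.Adj (e i).1 (e i).2) ∧
    Function.Injective (fun p : Fin m × Bool => if p.2 then (e p.1).1 else (e p.1).2)

/-- If `G` is an `n`-vertex graph with minimum degree at least `ℓ ≥ 1` whose maximum matching
has size `m` with `n > 2m`, then there are disjoint vertex sets `L` and `S` with `|L| = ℓ` and
`|S| ≥ (n - 2m)/C(2m, ℓ)` such that every vertex of `S` is adjacent to every vertex of `L`
(i.e. `G` contains a complete bipartite subgraph `K_{ℓ,⌈(n-2m)/C(2m,ℓ)⌉}`). -/
theorem complete_bipartite_of_max_matching {V : Type*} [Fintype V] (n m ℓ : ℕ)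
    (hℓ : 1 ≤ ℓ) (G : SimpleGraph V) (hcard : Fintype.card V = n)
    (hdeg : ∀ v : V, ℓ ≤ Nat.card (G.neighborSet v))
    (hM : HasMatchingOfSize G m) (hMmax : ¬ HasMatchingOfSize G (m + 1))
    (hn : 2 * m < n) :
    ∃ L S : Finset V, Disjoint L S ∧ L.card = ℓ ∧
      n - 2 * m ≤ S.card * Nat.choose (2 * m) ℓ ∧
      ∀ u ∈ L, ∀ v ∈ S, G.Adj u v := by
  classical
  obtain ⟨e, he, hinj⟩ := hM
  set F : Fin m × Bool → V := fun p => if p.2 then (e p.1).1 else (e p.1).2 with hF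
  -- matched vertices
  set Mset : Finset V := Finset.image F Finset.univ with hMset
  have hMcard : Mset.card = 2 * m := by
    rw [hMset, Finset.card_image_of_injective _ hinj, Finset.card_univ,
      Fintype.card_prod, Fintype.card_fin, Fintype.card_bool]
    ring
  -- unmatched vertices
  set U : Finset V := Finset.univ \ Mset with hU
  have hUcard : U.card = n - 2 * m := by
    rw [hU, Finset.card_sdiff_of_subset (Finset.subset_univ _), Finset.card_univ, hcard, hMcard]
  -- unmatched vertices form an independent set
  have hind : ∀ u ∈ U, ∀ v ∈ U, ¬ G.Adj u v := by
    intro u hu v hv hadj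
    apply hMmax
    refine ⟨Fin.snoc e (u, v), ?_, ?_⟩
    · intro i
      rcases Fin.eq_castSucc_or_eq_last i with ⟨i', rfl⟩ | rfl
      · simpa using he i'
      · simpa using hadj
    · rintro ⟨i, b⟩ ⟨j, c⟩ h
      simp only at h
      have huM : u ∉ Mset := by
        rw [hU, Finset.mem_sdiff] at hu; exact hu.2
      have hvM : v ∉ Mset := by
        rw [hU, Finset.mem_sdiff] at hv; exact hv.2
      have hmem : ∀ (k : Fin m) (b : Bool),
          (if b then (e k).1 else (e k).2) ∈ Mset := by
        intro k b
        rw [hMset]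
        exact Finset.mem_image.2 ⟨(k, b), Finset.mem_univ _, rfl⟩
      rcases Fin.eq_castSucc_or_eq_last i with ⟨i', rfl⟩ | rfl <;>
        rcases Fin.eq_castSucc_or_eq_last j with ⟨j', rfl⟩ | rfl
      · -- both castSucc
        simp only [Fin.snoc_castSucc] at h
        have := hinj (a₁ := (i', b)) (a₂ := (j', c)) h
        obtain ⟨h1, h2⟩ := Prod.mk.injEq .. ▸ this
        simp [h1, h2]
      · -- i castSucc, j last
        exfalso
        simp only [Fin.snoc_last, Fin.snoc_castSucc] at h
        cases c <;> simp only [if_true, if_false, Bool.false_eq_true] at h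
        · exact hvM (h.symm ▸ hmem i' b)
        · exact huM (h.symm ▸ hmem i' b)
      · -- i last, j castSucc
        exfalso
        simp only [Fin.snoc_last, Fin.snoc_castSucc] at h
        cases b <;> simp only [if_true, if_false, Bool.false_eq_true] at h
        · exact hvM (h ▸ hmem j' c)
        · exact huM (h ▸ hmem j' c)
      · -- both last
        simp only [Fin.snoc_last] at h
        cases b <;> cases c <;> simp only [if_true, if_false, Bool.false_eq_true] at h ⊢
        · exact absurd h (G.ne_of_adj hadj).symm
        · exact absurd h (G.ne_of_adj hadj)
  -- neighbors of unmatched vertices are matched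
  have hnbr : ∀ v ∈ U, (G.neighborSet v).toFinset ⊆ Mset := by
    intro v hv w hw
    by_contra hwM
    have hwU : w ∈ U := by rw [hU, Finset.mem_sdiff]; exact ⟨Finset.mem_univ _, hwM⟩
    rw [Set.mem_toFinset, SimpleGraph.mem_neighborSet] at hw
    exact hind v hv w hwU hw
  have hdeg' : ∀ v : V, ℓ ≤ (G.neighborSet v).toFinset.card := by
    intro v
    have := hdeg v
    rwa [Nat.card_coe_set_eq, Set.ncard_eq_toFinset_card'] at this
  -- choose an ℓ-subset of neighbors for unmatched vertices
  have hex : ∀ v ∈ U, ∃ t ⊆ (G.neighborSet v).toFinset, t.card = ℓ :=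
    fun v _ => Finset.exists_subset_card_eq (hdeg' v)
  set g : V → Finset V := fun v =>
    if h : v ∈ U then (hex v h).choose else ∅ with hg
  have hgsub : ∀ v ∈ U, g v ⊆ (G.neighborSet v).toFinset := by
    intro v hv; rw [hg]; simp only [dif_pos hv]; exact (hex v hv).choose_spec.1
  have hgcard : ∀ v ∈ U, (g v).card = ℓ := by
    intro v hv; rw [hg]; simp only [dif_pos hv]; exact (hex v hv).choose_spec.2
  set T : Finset (Finset V) := Mset.powersetCard ℓ with hT
  have hTcard : T.card = Nat.choose (2 * m) ℓ := by
    rw [hT, Finset.card_powersetCard, hMcard]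
  have hmaps : ∀ v ∈ U, g v ∈ T := by
    intro v hv
    rw [hT, Finset.mem_powersetCard]
    exact ⟨(hgsub v hv).trans (hnbr v hv), hgcard v hv⟩
  -- U is nonempty, so ℓ ≤ 2m and T is nonempty
  have hUne : U.Nonempty := by
    rw [← Finset.card_pos, hUcard]; omega
  obtain ⟨v₀, hv₀⟩ := hUne
  have hTne : T.Nonempty := ⟨g v₀, hmaps v₀ hv₀⟩
  -- pigeonhole
  obtain ⟨L, hLT, hLmax⟩ := Finset.exists_max_image T
    (fun y => (U.filter fun v => g v = y).card) hTne
  have hsum : U.card = ∑ y ∈ T, (U.filter fun v => g v = y).card :=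
    Finset.card_eq_sum_card_fiberwise hmaps
  have hUle : U.card ≤ T.card * (U.filter fun v => g v = L).card := by
    rw [hsum]
    calc ∑ y ∈ T, (U.filter fun v => g v = y).card
        ≤ ∑ _y ∈ T, (U.filter fun v => g v = L).card :=
          Finset.sum_le_sum fun y hy => hLmax y hy
      _ = T.card * (U.filter fun v => g v = L).card := by
          rw [Finset.sum_const, smul_eq_mul]
  refine ⟨L, U.filter fun v => g v = L, ?_, ?_, ?_, ?_⟩
  · -- disjoint
    have hLM : L ⊆ Mset := (Finset.mem_powersetCard.1 hLT).1
    refine Finset.disjoint_left.2 fun a haL haS => ?_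
    have : a ∈ U := (Finset.mem_filter.1 haS).1
    rw [hU, Finset.mem_sdiff] at this
    exact this.2 (hLM haL)
  · exact (Finset.mem_powersetCard.1 hLT).2
  · calc n - 2 * m = U.card := hUcard.symm
      _ ≤ T.card * (U.filter fun v => g v = L).card := hUle
      _ = (U.filter fun v => g v = L).card * Nat.choose (2 * m) ℓ := by
          rw [hTcard]; ring
  · intro u huL v hvS
    obtain ⟨hvU, hgv⟩ := Finset.mem_filter.1 hvS
    have : u ∈ (G.neighborSet v).toFinset := hgsub v hvU (hgv ▸ huL)
    rw [Set.mem_toFinset, SimpleGraph.mem_neighborSet] at this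
    exact this.symm
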